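/- For every fixed integer i ≥ 0, the limit as k → ∞ of ᾱ({1, k, k+2i+1}) equals (i+1)/(2i+3). -/

import Mathlib

open Filter

/-- The upper density of a set of integers. -/
noncomputable def density (A : Set ℤ) : ℝ :=
  Filter.limsup
    (fun N : ℕ => ((A ∩ Set.Icc (-(N : ℤ)) (N : ℤ)).ncard : ℝ) / (2 * (N : ℝ) + 1))
    Filter.atTop

/-- A set of integers is independent in the distance graph `G(S)` if no two distinct
elements differ by an element of `S`. -/
def IsIndepSet (S : Finset ℕ) (A : Set ℤ) : Prop :=
  ∀ a ∈ A, ∀ b ∈ A, a ≠ b → (a - b).natAbs ∉ S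

/-- The independence ratio of the distance graph `G(S)`. -/
noncomputable def indRatio (S : Finset ℕ) : ℝ :=
  sSup (density '' {A : Set ℤ | IsIndepSet S A})

lemma ncard_window_le (A : Set ℤ) (N : ℕ) :
    (A ∩ Set.Icc (-(N : ℤ)) (N : ℤ)).ncard ≤ 2 * N + 1 := by
  have h1 : (A ∩ Set.Icc (-(N : ℤ)) (N : ℤ)).ncard ≤ (Set.Icc (-(N : ℤ)) (N : ℤ)).ncard := by
    exact Set.ncard_le_ncard (Set.inter_subset_right) (Set.finite_Icc _ _)
  have h2 : (Set.Icc (-(N : ℤ)) (N : ℤ)).ncard = 2 * N + 1 := by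
    rw [← Finset.coe_Icc, Set.ncard_coe_finset, Int.card_Icc]
    omega
  omega

lemma window_ratio_nonneg (A : Set ℤ) (N : ℕ) :
    0 ≤ ((A ∩ Set.Icc (-(N : ℤ)) (N : ℤ)).ncard : ℝ) / (2 * (N : ℝ) + 1) := by
  positivity

lemma window_ratio_le_one (A : Set ℤ) (N : ℕ) :
    ((A ∩ Set.Icc (-(N : ℤ)) (N : ℤ)).ncard : ℝ) / (2 * (N : ℝ) + 1) ≤ 1 := by
  rw [div_le_one (by positivity)]
  have := ncard_window_le A N
  have : ((A ∩ Set.Icc (-(N : ℤ)) (N : ℤ)).ncard : ℝ) ≤ (2 * N + 1 : ℕ) := by exact_mod_cast this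
  push_cast at this ⊢
  linarith

lemma limsup_le_of_le_tendsto {u v : ℕ → ℝ} {L : ℝ} (h0 : ∀ N, 0 ≤ u N)
    (h : ∀ N, u N ≤ v N) (hv : Tendsto v atTop (nhds L)) :
    Filter.limsup u Filter.atTop ≤ L := by
  rw [← hv.limsup_eq]
  exact Filter.limsup_le_limsup (Filter.Eventually.of_forall h)
    (Filter.IsBoundedUnder.isCoboundedUnder_le (Filter.isBoundedUnder_of ⟨0, fun N => h0 N⟩))
    hv.isBoundedUnder_le

lemma le_limsup_of_tendsto_le {u w : ℕ → ℝ} {L : ℝ} (h1 : ∀ N, u N ≤ 1)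
    (h : ∀ N, w N ≤ u N) (hw : Tendsto w atTop (nhds L)) :
    L ≤ Filter.limsup u Filter.atTop := by
  rw [← hw.limsup_eq]
  exact Filter.limsup_le_limsup (Filter.Eventually.of_forall h)
    hw.isCoboundedUnder_le (Filter.isBoundedUnder_of ⟨1, h1⟩)

lemma density_le_one (A : Set ℤ) : density A ≤ 1 :=
  limsup_le_of_le_tendsto (window_ratio_nonneg A) (window_ratio_le_one A) tendsto_const_nhds

lemma bddAbove_density : BddAbove (density '' {A : Set ℤ | IsIndepSet S A}) := by
  refine ⟨1, ?_⟩
  rintro x ⟨A, -, rfl⟩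
  exact density_le_one A

-- no-two-consecutive in range (2n) implies card ≤ n
lemma noconsec_card_le {n : ℕ} {J : Finset ℕ} (hc : ∀ j, ¬(j ∈ J ∧ j + 1 ∈ J))
    (hsub : J ⊆ Finset.range (2 * n)) : J.card ≤ n := by
  have : J.card ≤ (Finset.range n).card := by
    apply Finset.card_le_card_of_injOn (fun j => j / 2)
    · intro j hj
      have := hsub hj
      simp only [Finset.mem_range, Finset.mem_coe] at this ⊢
      omega
    · intro j hj j' hj' heq
      simp only at heq
      by_contra hne
      have h1 : j = j' + 1 ∨ j' = j + 1 := by omega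
      rcases h1 with h | h
      · exact hc j' ⟨hj', by rwa [← h]⟩
      · exact hc j ⟨hj, by rwa [← h]⟩
  simpa using this

-- independent sets in the odd cycle C_{2i+3} (vertices = range (2i+3)) have ≤ i+1 elements
lemma cycle_card_le {i : ℕ} {J : Finset ℕ} (hsub : J ⊆ Finset.range (2 * i + 3))
    (hc : ∀ j, ¬(j ∈ J ∧ j + 1 ∈ J)) (hw : ¬(0 ∈ J ∧ 2 * i + 2 ∈ J)) :
    J.card ≤ i + 1 := by
  by_cases htop : 2 * i + 2 ∈ J
  · have h0 : 0 ∉ J := fun h => hw ⟨h, htop⟩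
    have h1 : 2 * i + 1 ∉ J := fun h => hc (2 * i + 1) ⟨h, htop⟩
    -- J \ {2i+2} shifted down by 1 is in range (2i), no consecutive
    set J' := (J.erase (2 * i + 2)).image (fun j => j - 1) with hJ'
    have hinj : Set.InjOn (fun j => j - 1) ↑(J.erase (2 * i + 2)) := by
      intro x hx y hy hxy
      simp only [Finset.coe_erase, Set.mem_diff, Finset.mem_coe] at hx hy
      have hx1 : x ≠ 0 := fun h => h0 (h ▸ hx.1)
      have hy1 : y ≠ 0 := fun h => h0 (h ▸ hy.1)
      simp only at hxy
      omega
    have hcard : J'.card = J.card - 1 := by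
      rw [hJ', Finset.card_image_of_injOn hinj, Finset.card_erase_of_mem htop]
    have hle : J'.card ≤ i := by
      apply noconsec_card_le
      · intro j hj
        obtain ⟨⟨x, hx, hx1⟩, ⟨y, hy, hy1⟩⟩ := by
          simpa only [hJ', Finset.mem_image] using hj
        have hxe := Finset.mem_of_mem_erase hx
        have hye := Finset.mem_of_mem_erase hy
        have hx0 : x ≠ 0 := fun h => h0 (h ▸ hxe)
        have hy0 : y ≠ 0 := fun h => h0 (h ▸ hye)
        have : y = x + 1 := by omega
        exact hc x ⟨hxe, this ▸ hye⟩
      · intro j hj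
        obtain ⟨x, hx, hx1⟩ := by simpa only [hJ', Finset.mem_image] using hj
        have hxe := Finset.mem_of_mem_erase hx
        have hxr := hsub hxe
        have hxne := Finset.ne_of_mem_erase hx
        have hx0 : x ≠ 0 := fun h => h0 (h ▸ hxe)
        have : x ≠ 2 * i + 1 := fun h => h1 (h ▸ hxe)
        simp only [Finset.mem_range] at hxr ⊢
        omega
    omega
  · have : J ⊆ Finset.range (2 * (i + 1)) := by
      intro j hj
      have := hsub hj
      simp only [Finset.mem_range] at this ⊢
      have : j ≠ 2 * i + 2 := fun h => htop (h ▸ hj)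
      omega
    exact noconsec_card_le hc this

def cW (i k : ℕ) (x : ℤ) (j : ℕ) : ℤ := if j ≤ i + 1 then x + j else x + k + j - 1

lemma cW_injOn {i k : ℕ} (hk : 1 ≤ k) (x : ℤ) :
    Set.InjOn (cW i k x) ↑(Finset.range (2 * i + 3)) := by
  intro a _ b _ hab
  unfold cW at hab
  split_ifs at hab with h1 h2 h2 <;> omega

lemma window_card_le {i k : ℕ} (hk : 1 ≤ k) (x : ℤ) (B : Finset ℤ)
    (hB : ∀ b ∈ B, ∃ j ∈ Finset.range (2 * i + 3), cW i k x j = b)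
    (hind : ∀ a ∈ B, ∀ b ∈ B, a ≠ b → (a - b).natAbs ∉ ({1, k, k + 2 * i + 1} : Finset ℕ)) :
    B.card ≤ i + 1 := by
  classical
  set J := (Finset.range (2 * i + 3)).filter (fun j => cW i k x j ∈ B) with hJ
  have hJsub : J ⊆ Finset.range (2 * i + 3) := Finset.filter_subset _ _
  have hBeq : B = J.image (cW i k x) := by
    apply Finset.Subset.antisymm
    · intro b hb
      obtain ⟨j, hj, hjb⟩ := hB b hb
      exact Finset.mem_image.2 ⟨j, Finset.mem_filter.2 ⟨hj, hjb ▸ hb⟩, hjb⟩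
    · intro b hb
      obtain ⟨j, hj, hjb⟩ := Finset.mem_image.1 hb
      exact hjb ▸ (Finset.mem_filter.1 hj).2
  have hcard : B.card = J.card := by
    rw [hBeq, Finset.card_image_of_injOn ((cW_injOn hk x).mono (by exact_mod_cast hJsub))]
  rw [hcard]
  apply cycle_card_le hJsub
  · -- no consecutive
    rintro j ⟨hj1, hj2⟩
    have hj1' := Finset.mem_filter.1 hj1
    have hj2' := Finset.mem_filter.1 hj2
    have hjr : j + 1 < 2 * i + 3 := Finset.mem_range.1 hj2'.1
    have hne : cW i k x j ≠ cW i k x (j + 1) := by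
      unfold cW; split_ifs with h1 h2 h2 <;> omega
    apply hind _ hj1'.2 _ hj2'.2 hne
    have : (cW i k x j - cW i k x (j + 1)).natAbs = 1 ∨
        (cW i k x j - cW i k x (j + 1)).natAbs = k := by
      unfold cW; split_ifs with h1 h2 h2 <;> [left; right; omega; left] <;> omega
    rcases this with h | h <;> rw [h] <;> simp [Finset.mem_insert]
  · -- no wrap pair
    rintro ⟨h0, h2⟩
    have h0' := Finset.mem_filter.1 h0
    have h2' := Finset.mem_filter.1 h2
    have hne : cW i k x 0 ≠ cW i k x (2 * i + 2) := by
      unfold cW; split_ifs <;> omega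
    apply hind _ h0'.2 _ h2'.2 hne
    have : (cW i k x 0 - cW i k x (2 * i + 2)).natAbs = k + 2 * i + 1 := by
      unfold cW; split_ifs <;> omega
    rw [this]
    simp [Finset.mem_insert]

lemma cW_shift (i k : ℕ) (x : ℤ) (j : ℕ) : cW i k x j = x + cW i k 0 j := by
  unfold cW; split_ifs <;> ring

lemma cW_bounds (i k : ℕ) {j : ℕ} (hj : j < 2 * i + 3) :
    0 ≤ cW i k 0 j ∧ cW i k 0 j ≤ (k : ℤ) + 2 * i + 1 := by
  unfold cW; split_ifs <;> constructor <;> omega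

noncomputable def Wfin (i k : ℕ) : Finset ℤ := (Finset.range (2 * i + 3)).image (cW i k 0)

lemma count_bound {i k : ℕ} (hk : 1 ≤ k) {A : Set ℤ}
    (hA : ∀ a ∈ A, ∀ b ∈ A, a ≠ b → (a - b).natAbs ∉ ({1, k, k + 2 * i + 1} : Finset ℕ))
    (N : ℕ) :
    (2 * i + 3) * (A ∩ Set.Icc (-(N : ℤ)) (N : ℤ)).ncard ≤
      (i + 1) * (2 * N + (k + 2 * i + 1) + 1) := by
  classical
  set K : ℕ := k + 2 * i + 1 with hK
  have hfin : (A ∩ Set.Icc (-(N : ℤ)) (N : ℤ)).Finite :=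
    (Set.finite_Icc _ _).subset Set.inter_subset_right
  set F : Finset ℤ := hfin.toFinset with hF
  have hFsub : ∀ n ∈ F, n ∈ A ∧ -(N : ℤ) ≤ n ∧ n ≤ N := by
    intro n hn
    rw [hF, Set.Finite.mem_toFinset] at hn
    exact ⟨hn.1, hn.2.1, hn.2.2⟩
  set X : Finset ℤ := Finset.Icc (-(N : ℤ) - K) N with hX
  -- window bound
  have hwin : ∀ x ∈ X, (F.filter (fun n => n - x ∈ Wfin i k)).card ≤ i + 1 := by
    intro x _
    apply window_card_le hk x
    · intro b hb
      obtain ⟨hbF, hbW⟩ := Finset.mem_filter.1 hb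
      obtain ⟨j, hj, hjb⟩ := Finset.mem_image.1 hbW
      exact ⟨j, hj, by rw [cW_shift]; omega⟩
    · intro a ha b hb hab
      exact hA a (hFsub a (Finset.mem_filter.1 ha).1).1 b (hFsub b (Finset.mem_filter.1 hb).1).1 hab
  -- double count
  have hswap : ∑ x ∈ X, (F.filter (fun n => n - x ∈ Wfin i k)).card
      = ∑ n ∈ F, (X.filter (fun x => n - x ∈ Wfin i k)).card := by
    simp_rw [Finset.card_filter]
    exact Finset.sum_comm
  have hinner : ∀ n ∈ F, (X.filter (fun x => n - x ∈ Wfin i k)).card = 2 * i + 3 := by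
    intro n hn
    have heq : X.filter (fun x => n - x ∈ Wfin i k) = (Wfin i k).image (fun w => n - w) := by
      ext x
      simp only [Finset.mem_filter, Finset.mem_image]
      constructor
      · rintro ⟨-, hw⟩
        exact ⟨n - x, hw, by ring⟩
      · rintro ⟨w, hw, rfl⟩
        obtain ⟨j, hj, hjw⟩ := Finset.mem_image.1 hw
        have hb := cW_bounds i k (Finset.mem_range.1 hj)
        have hn' := hFsub n hn
        constructor
        · rw [hX, Finset.mem_Icc]
          omega
        · simpa using hw
    rw [heq, Finset.card_image_of_injOn (fun a _ b _ h => by omega)]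
    unfold Wfin
    rw [Finset.card_image_of_injOn (cW_injOn hk 0), Finset.card_range]
  have hsum2 : ∑ n ∈ F, (X.filter (fun x => n - x ∈ Wfin i k)).card = F.card * (2 * i + 3) := by
    rw [Finset.sum_congr rfl hinner, Finset.sum_const, smul_eq_mul]
  have hsum1 : ∑ x ∈ X, (F.filter (fun n => n - x ∈ Wfin i k)).card ≤ X.card * (i + 1) := by
    calc ∑ x ∈ X, (F.filter (fun n => n - x ∈ Wfin i k)).card
        ≤ ∑ _x ∈ X, (i + 1) := Finset.sum_le_sum hwin
      _ = X.card * (i + 1) := by rw [Finset.sum_const, smul_eq_mul]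
  have hXcard : X.card = 2 * N + K + 1 := by
    rw [hX, Int.card_Icc]
    omega
  have hFcard : (A ∩ Set.Icc (-(N : ℤ)) (N : ℤ)).ncard = F.card := by
    rw [hF, Set.ncard_eq_toFinset_card' , Set.Finite.card_toFinset]
    simp
  rw [hFcard]
  calc (2 * i + 3) * F.card = F.card * (2 * i + 3) := Nat.mul_comm _ _
    _ = ∑ n ∈ F, (X.filter (fun x => n - x ∈ Wfin i k)).card := hsum2.symm
    _ = ∑ x ∈ X, (F.filter (fun n => n - x ∈ Wfin i k)).card := hswap.symm
    _ ≤ X.card * (i + 1) := hsum1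
    _ = (i + 1) * (2 * N + K + 1) := by rw [hXcard, Nat.mul_comm]

lemma density_le_lam {i k : ℕ} (hk : 1 ≤ k) {A : Set ℤ}
    (hA : ∀ a ∈ A, ∀ b ∈ A, a ≠ b → (a - b).natAbs ∉ ({1, k, k + 2 * i + 1} : Finset ℕ)) :
    density A ≤ ((i : ℝ) + 1) / (2 * (i : ℝ) + 3) := by
  set lam : ℝ := ((i : ℝ) + 1) / (2 * (i : ℝ) + 3) with hlam
  set K : ℕ := k + 2 * i + 1 with hK
  apply limsup_le_of_le_tendsto (window_ratio_nonneg A)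
    (v := fun N : ℕ => lam + (lam * K) / (2 * (N : ℝ) + 1))
  · intro N
    have hcnt := count_bound hk hA N
    have hpos : (0 : ℝ) < 2 * (N : ℝ) + 1 := by positivity
    have h3 : (0:ℝ) < 2 * (i:ℝ) + 3 := by positivity
    have hc : ((2 * i + 3 : ℕ) : ℝ) * ((A ∩ Set.Icc (-(N : ℤ)) (N : ℤ)).ncard : ℝ)
        ≤ ((i + 1 : ℕ) : ℝ) * ((2 * N + K + 1 : ℕ) : ℝ) := by
      rw [← Nat.cast_mul, ← Nat.cast_mul]
      exact_mod_cast hcnt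
    push_cast at hc
    rw [div_le_iff₀ hpos]
    have hexp : (lam + lam * (K:ℝ) / (2 * (N:ℝ) + 1)) * (2 * (N:ℝ) + 1)
        = lam * (2*(N:ℝ)+1+(K:ℝ)) := by
      field_simp
    rw [hexp, hlam, div_mul_eq_mul_div, le_div_iff₀ h3]
    push_cast
    nlinarith [hc]
  · have h0 : Tendsto (fun N : ℕ => (lam * K) / (2 * (N : ℝ) + 1)) atTop (nhds 0) := by
      apply Tendsto.div_atTop tendsto_const_nhds
      apply Filter.tendsto_atTop_add_const_right
      exact (tendsto_natCast_atTop_atTop (R := ℝ)).const_mul_atTop (by norm_num)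
    simpa using tendsto_const_nhds.add h0


lemma lower_setup (i k : ℕ) (hk : (2*i+3)*(2*i+3) + 1 ≤ k) :
    ∃ t c : ℕ, t < 2*i+3 ∧
      k*(i+1) + t = (i+1) + (2*i+3)*c ∧
      (2*i+1)*t + (2*i+3) + 1 ≤ k := by
  set p := 2*i+3 with hp
  have hkp : k*(i+1) ≤ k*p := Nat.mul_le_mul_left k (by omega)
  set X := i + 1 + (p*k - k*(i+1)) with hX
  set t := X % p with htdef
  have hp0 : 0 < p := by omega
  have ht : t < p := Nat.mod_lt _ hp0
  have hXe : k*(i+1) + X = (i+1) + p*k := by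
    have : k*(i+1) ≤ p*k := by rw [Nat.mul_comm p k]; exact hkp
    omega
  have htc : (k*(i+1) + t) % p = i+1 := by
    rw [htdef, Nat.add_mod_mod, hXe, Nat.add_mul_mod_self_left, Nat.mod_eq_of_lt (by omega)]
  refine ⟨t, (k*(i+1)+t)/p, ht, ?_, ?_⟩
  · have := Nat.div_add_mod (k*(i+1)+t) p
    omega
  · have h1 : (2*i+1)*t ≤ (2*i+1)*(2*i+2) := Nat.mul_le_mul_left _ (by omega)
    nlinarith


lemma step2_aux (kR pR DR mR iR : ℝ) (hk : 0 < kR) (hi : 0 ≤ iR) (hpe : pR = 2*iR+3)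
    (hmd : mR + DR = kR*(iR+1)) (hD : DR ≤ pR*pR) :
    (iR+1)/(2*iR+3) - (2*iR+3)/kR ≤ mR/(kR*pR) := by
  have hp : (0:ℝ) < pR := by rw [hpe]; linarith
  rw [← hpe, div_sub_div _ _ (ne_of_gt hp) (ne_of_gt hk), div_le_div_iff₀ (by positivity) (by positivity)]
  have hmR : mR = kR*(iR+1) - DR := by linarith
  rw [hmR]
  nlinarith [mul_pos hp hk, sq_nonneg pR, mul_le_mul_of_nonneg_right hD (le_of_lt hp)]

lemma count_lower (A : Set ℤ) (M P' : ℕ) (α : ℤ) (hP'0 : 0 < P')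
    (hAmem : ∀ n : ℤ, (∃ j : ℕ, j < M ∧ (P':ℤ) ∣ (n - (j:ℤ)*α)) → n ∈ A)
    (hdist : ∀ j j' : ℕ, j < M → j' < M → (P':ℤ) ∣ (((j:ℤ) - (j':ℤ))*α) → j = j') :
    ∀ N : ℕ, ((2*N+1)/P') * M ≤ (A ∩ Set.Icc (-(N : ℤ)) (N : ℤ)).ncard := by
  intro N
  set q := (2*N+1)/P' with hq
  set e : ℕ × ℕ → ℤ := fun lj =>
    -(N:ℤ) + lj.1*(P':ℤ) + (((lj.2:ℤ)*α + N - lj.1*(P':ℤ)) % (P':ℤ)) with he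
  have hP'Z : (0:ℤ) < (P':ℤ) := by exact_mod_cast hP'0
  have hebounds : ∀ l j : ℕ, l < q →
      -(N:ℤ) + l*(P':ℤ) ≤ e (l,j) ∧ e (l,j) < -(N:ℤ) + l*(P':ℤ) + P' := by
    intro l j hl
    constructor
    · have := Int.emod_nonneg ((j:ℤ)*α + N - l*(P':ℤ)) (ne_of_gt hP'Z)
      rw [he]; dsimp only; linarith
    · have := Int.emod_lt_of_pos ((j:ℤ)*α + N - l*(P':ℤ)) hP'Z
      rw [he]; dsimp only; linarith
  have hmemA : ∀ l j : ℕ, l < q → j < M → e (l,j) ∈ A ∩ Set.Icc (-(N : ℤ)) (N : ℤ) := by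
    intro l j hl hj
    have hb := hebounds l j hl
    constructor
    · refine hAmem _ ⟨j, hj, ⟨-(((j:ℤ)*α + N - l*(P':ℤ)) / (P':ℤ)), ?_⟩⟩
      rw [he]; dsimp only
      rw [Int.emod_def]; ring
    · constructor
      · have h0 : (0:ℤ) ≤ l*(P':ℤ) := by positivity
        linarith [hb.1]
      · have h1 : ((l:ℤ)+1)*(P':ℤ) ≤ (q:ℤ)*(P':ℤ) := by
          apply mul_le_mul_of_nonneg_right _ (le_of_lt hP'Z)
          exact_mod_cast Nat.succ_le_of_lt hl
        have h2 : (q:ℤ)*(P':ℤ) ≤ 2*(N:ℤ)+1 := by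
          have := Nat.div_mul_le_self (2*N+1) P'
          exact_mod_cast this
        have h3 : e (l,j) < -(N:ℤ) + ((l:ℤ)+1)*(P':ℤ) := by
          have := hb.2
          nlinarith
        omega
  have hinj : Set.InjOn e ↑((Finset.range q) ×ˢ (Finset.range M)) := by
    rintro ⟨l, j⟩ hlj ⟨l', j'⟩ hlj' heq
    simp only [Finset.coe_product, Set.mem_prod, Finset.mem_coe, Finset.mem_range] at hlj hlj'
    obtain ⟨hl, hj⟩ := hlj
    obtain ⟨hl', hj'⟩ := hlj'
    have hb := hebounds l j hl
    have hb' := hebounds l' j' hl'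
    have hll' : l = l' := by
      by_contra hne
      rcases Nat.lt_or_ge l l' with h | h
      · have h1 : ((l:ℤ)+1)*(P':ℤ) ≤ (l':ℤ)*(P':ℤ) :=
          mul_le_mul_of_nonneg_right (by exact_mod_cast Nat.succ_le_of_lt h) (le_of_lt hP'Z)
        have h2 := hb.2
        have h3 := hb'.1
        rw [heq] at h2
        nlinarith
      · have hlt : l' < l := by omega
        have h1 : ((l':ℤ)+1)*(P':ℤ) ≤ (l:ℤ)*(P':ℤ) :=
          mul_le_mul_of_nonneg_right (by exact_mod_cast Nat.succ_le_of_lt hlt) (le_of_lt hP'Z)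
        have h2 := hb'.2
        have h3 := hb.1
        rw [← heq] at h2
        nlinarith
    subst hll'
    have hjj' : j = j' := by
      have hmod : ((j:ℤ)*α + N - l*(P':ℤ)) % (P':ℤ) = ((j':ℤ)*α + N - l*(P':ℤ)) % (P':ℤ) := by
        have h4 := heq
        rw [he] at h4; dsimp only at h4
        linarith
      have hdvd : (P':ℤ) ∣ (((j:ℤ) - (j':ℤ)) * α) := by
        have h2 : (P':ℤ) ∣ (((j':ℤ)*α + N - l*(P':ℤ)) - ((j:ℤ)*α + N - l*(P':ℤ))) :=
          Int.ModEq.dvd hmod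
        have h3 : ((j':ℤ)*α + N - l*(P':ℤ)) - ((j:ℤ)*α + N - l*(P':ℤ))
            = ((j':ℤ) - (j:ℤ)) * α := by ring
        rw [h3] at h2
        have h5 : ((j:ℤ) - (j':ℤ)) * α = -(((j':ℤ) - (j:ℤ)) * α) := by ring
        rw [h5]
        exact dvd_neg.2 h2
      exact hdist j j' hj hj' hdvd
    rw [hjj']
  have hsub : ↑(((Finset.range q) ×ˢ (Finset.range M)).image e) ⊆
      A ∩ Set.Icc (-(N : ℤ)) (N : ℤ) := by
    intro x hx
    simp only [Finset.coe_image, Set.mem_image, Finset.mem_coe, Finset.mem_product,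
      Finset.mem_range] at hx
    obtain ⟨⟨l, j⟩, ⟨hl, hj⟩, rfl⟩ := hx
    exact hmemA l j hl hj
  have hcard : (((Finset.range q) ×ˢ (Finset.range M)).image e).card = q * M := by
    rw [Finset.card_image_of_injOn hinj, Finset.card_product, Finset.card_range,
      Finset.card_range]
  calc q * M = (((Finset.range q) ×ˢ (Finset.range M)).image e).card := hcard.symm
    _ = (↑(((Finset.range q) ×ˢ (Finset.range M)).image e) : Set ℤ).ncard :=
        (Set.ncard_coe_finset _).symm
    _ ≤ (A ∩ Set.Icc (-(N : ℤ)) (N : ℤ)).ncard :=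
        Set.ncard_le_ncard hsub ((Set.finite_Icc _ _).subset Set.inter_subset_right)


lemma lower_construction (i k : ℕ) (hk : (2*i+3)*(2*i+3) + 1 ≤ k) :
    ∃ (A : Set ℤ) (M P' : ℕ), 0 < P' ∧
      IsIndepSet ({1, k, k + 2*i+1} : Finset ℕ) A ∧
      (∀ N : ℕ, ((2*N+1)/P') * M ≤ (A ∩ Set.Icc (-(N : ℤ)) (N : ℤ)).ncard) ∧
      ((i:ℝ)+1)/(2*(i:ℝ)+3) - (2*(i:ℝ)+3)/(k:ℝ) ≤ (M:ℝ)/(P':ℝ) := by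
  classical
  obtain ⟨t, c, ht, hac, hbig⟩ := lower_setup i k hk
  set p := 2*i+3 with hp
  set dd := 2*i+1 with hdd
  set a := k*(i+1) + t with ha
  set P := k*p with hP
  set D := dd*t with hD
  set m := k*(i+1) - D with hm
  have hk0 : 0 < k := by omega
  have hP0 : 0 < P := by positivity
  have hDk : D + p + 1 ≤ k := by omega
  have hkk : k ≤ k*(i+1) := by nlinarith
  have hm1 : 1 ≤ m := by omega
  have hmP : m + D = k*(i+1) := by omega
  have hPsum : P = k*(i+1) + k*(i+1) + k := by rw [hP, hp]; ring
  -- gcd and Bezout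
  set g := Nat.gcd a P with hg
  have hg0 : 0 < g := Nat.gcd_pos_of_pos_right a hP0
  set α := Int.gcdA (a:ℤ) (P:ℤ) with hα
  set β := Int.gcdB (a:ℤ) (P:ℤ) with hβ
  have hbez : (g:ℤ) = (a:ℤ)*α + (P:ℤ)*β := by
    rw [hg, ← Int.gcd_natCast_natCast]
    exact Int.gcd_eq_gcd_ab (a:ℤ) (P:ℤ)
  set a' := a / g with ha'
  have haa' : a = g * a' := (Nat.mul_div_cancel' (Nat.gcd_dvd_left a P)).symm
  set P' := P / g with hP'
  have hPP' : P = g * P' := (Nat.mul_div_cancel' (Nat.gcd_dvd_right a P)).symm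
  have hP'0 : 0 < P' := by
    rcases Nat.eq_zero_or_pos P' with h | h
    · rw [h, Nat.mul_zero] at hPP'; omega
    · exact h
  set M := (m-1)/g + 1 with hM
  have hMg1 : (M-1)*g ≤ m-1 := by
    rw [hM]; simpa using Nat.div_mul_le_self (m-1) g
  have hMg2 : m ≤ M*g := by
    have h1 : (m-1)/g * g + (m-1)%g = m-1 := Nat.div_add_mod' (m-1) g
    have h2 : (m-1) % g < g := Nat.mod_lt _ hg0
    have h3 : M * g = (m-1)/g * g + g := by rw [hM, Nat.add_mul, Nat.one_mul]
    omega
  have hmlow : m ≤ k*(i+1) := by omega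
  have hmP2 : m ≤ P := by omega
  -- the set
  set A : Set ℤ := {n | ∃ j : ℕ, j < M ∧ (P':ℤ) ∣ (n - (j:ℤ) * α)} with hA
  -- bound on class differences
  have hDb : ∀ j j' : ℕ, j < M → j' < M → |((j:ℤ) - (j':ℤ))*(g:ℤ)| ≤ ((m-1 : ℕ):ℤ) := by
    intro j j' hj hj'
    rw [abs_mul, abs_of_nonneg (by positivity : (0:ℤ) ≤ (g:ℤ))]
    have h1 : |(j:ℤ) - (j':ℤ)| ≤ ((M-1 : ℕ):ℤ) := by
      rw [abs_le]; constructor <;> push_cast <;> omega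
    calc |(j:ℤ) - (j':ℤ)| * (g:ℤ) ≤ ((M-1:ℕ):ℤ) * (g:ℤ) :=
          mul_le_mul_of_nonneg_right h1 (by positivity)
      _ = (((M-1)*g : ℕ):ℤ) := by push_cast; ring
      _ ≤ ((m-1:ℕ):ℤ) := by exact_mod_cast hMg1
  -- key: classes are distinct
  have key : ∀ j j' : ℕ, j < M → j' < M → (P:ℤ) ∣ (((j:ℤ) - (j':ℤ))*(g:ℤ)) → j = j' := by
    intro j j' hj hj' hdvd
    have habs : |((j:ℤ) - (j':ℤ))*(g:ℤ)| < (P:ℤ) := by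
      calc |((j:ℤ) - (j':ℤ))*(g:ℤ)| ≤ ((m-1:ℕ):ℤ) := hDb j j' hj hj'
        _ < (P:ℤ) := by exact_mod_cast (by omega : m - 1 < P)
    have h0 := Int.eq_zero_of_abs_lt_dvd hdvd habs
    have : (j:ℤ) = (j':ℤ) := by
      rcases mul_eq_zero.1 h0 with h | h
      · linarith [sub_eq_zero.1 h]
      · exfalso; simp at h; omega
    exact_mod_cast this
  -- multiplication by a kills P'
  have mulP : ∀ w : ℤ, (P':ℤ) ∣ w → (P:ℤ) ∣ w * (a:ℤ) := by
    rintro w ⟨z, rfl⟩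
    refine ⟨z * (a':ℤ), ?_⟩
    have : ((P:ℕ):ℤ) = (g:ℤ) * (P':ℤ) := by exact_mod_cast hPP'
    have ha2 : ((a:ℕ):ℤ) = (g:ℤ) * (a':ℤ) := by exact_mod_cast haa'
    rw [this, ha2]; ring
  -- value congruence for members
  have valdvd : ∀ (n : ℤ) (j : ℕ), (P':ℤ) ∣ (n - (j:ℤ) * α) →
      (P:ℤ) ∣ (n * (a:ℤ) - (j:ℤ)*(g:ℤ)) := by
    intro n j hd
    obtain ⟨z, hz⟩ := mulP _ hd
    refine ⟨z - (j:ℤ)*β, ?_⟩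
    have : n * (a:ℤ) - (j:ℤ)*(g:ℤ) = (n - (j:ℤ)*α) * a - (j:ℤ)*((P:ℤ)*β) := by
      rw [hbez]; ring
    rw [this, hz]; ring
  -- the three ℕ identities
  have idk : k*a = k*(i+1) + P*c := by rw [hac, hP]; ring
  have iddd : dd*a = i*P + k + D := by rw [ha, hD, hdd, hP, hp]; ring
  have idkd : (k+dd)*a = (k*(i+1)+k+D) + P*(c+i) := by
    rw [Nat.add_mul, idk, iddd]; ring
  -- independence
  have hindep : IsIndepSet ({1, k, k + 2*i+1} : Finset ℕ) A := by
    intro n hn n' hn' hne hmem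
    obtain ⟨j, hj, hjd⟩ := hn
    obtain ⟨j', hj', hjd'⟩ := hn'
    have hd1 := valdvd n j hjd
    have hd2 := valdvd n' j' hjd'
    have hd : (P:ℤ) ∣ ((n - n') * (a:ℤ) - (((j:ℤ) - (j':ℤ))*(g:ℤ))) := by
      have := dvd_sub hd1 hd2
      have he : (n * (a:ℤ) - (j:ℤ)*(g:ℤ)) - (n' * (a:ℤ) - (j':ℤ)*(g:ℤ))
          = (n - n') * (a:ℤ) - (((j:ℤ) - (j':ℤ))*(g:ℤ)) := by ring
      rwa [he] at this
    set s := (n - n').natAbs with hs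
    -- the value decomposition
    have hva : ∃ v w : ℕ, s*a = v + P*w ∧ m ≤ v ∧ v + m ≤ P := by
      simp only [Finset.mem_insert, Finset.mem_singleton] at hmem
      rcases hmem with h1 | h2 | h3
      · exact ⟨a, 0, by rw [h1]; ring, by omega, by omega⟩
      · exact ⟨k*(i+1), c, by rw [h2, idk], by omega, by omega⟩
      · refine ⟨k*(i+1)+k+D, c+i, by rw [h3, show k + 2*i+1 = k + dd from by omega, idkd], by omega, by omega⟩
    obtain ⟨v, w, hid, hv1, hv2⟩ := hva
    have hidZ : (s:ℤ)*(a:ℤ) = (v:ℤ) + (P:ℤ)*(w:ℤ) := by exact_mod_cast congrArg (Nat.cast : ℕ → ℤ) hid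
    have hΔ := hDb j j' hj hj'
    set Δg := ((j:ℤ) - (j':ℤ))*(g:ℤ) with hΔg
    have hm1Z : ((m-1:ℕ):ℤ) = (m:ℤ) - 1 := by push_cast [hm1]; ring
    rw [hm1Z, abs_le] at hΔ
    obtain ⟨hΔ1, hΔ2⟩ := hΔ
    have hv1Z : (m:ℤ) ≤ (v:ℤ) := by exact_mod_cast hv1
    have hv2Z : (v:ℤ) + (m:ℤ) ≤ (P:ℤ) := by exact_mod_cast hv2
    rcases Int.natAbs_eq (n - n') with he | he
    · -- n - n' = s
      have hdv : (P:ℤ) ∣ ((v:ℤ) - Δg) := by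
        have h1 : (v:ℤ) - Δg = ((n - n') * (a:ℤ) - Δg) - (P:ℤ)*(w:ℤ) := by
          rw [← he] at hidZ
          linear_combination -hidZ
        rw [h1]
        exact dvd_sub hd (Dvd.intro _ rfl)
      have h0 := Int.eq_zero_of_abs_lt_dvd hdv (by rw [abs_lt]; constructor <;> linarith)
      linarith
    · -- n - n' = -s
      have hdv : (P:ℤ) ∣ ((v:ℤ) + Δg) := by
        have h1 : (v:ℤ) + Δg = -((n - n') * (a:ℤ) - Δg) - (P:ℤ)*(w:ℤ) := by
          rw [he]
          linear_combination -hidZ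
        rw [h1]
        exact dvd_sub (dvd_neg.2 hd) (Dvd.intro _ rfl)
      have h0 := Int.eq_zero_of_abs_lt_dvd hdv (by rw [abs_lt]; constructor <;> linarith)
      linarith
  -- distinctness of classes mod P'
  have hdist : ∀ j j' : ℕ, j < M → j' < M → (P':ℤ) ∣ (((j:ℤ) - (j':ℤ))*α) → j = j' := by
    intro j j' hj hj' hdvd
    obtain ⟨z, hz⟩ := mulP _ hdvd
    have hPd : (P:ℤ) ∣ (((j:ℤ) - (j':ℤ))*(g:ℤ)) := by
      refine ⟨z + ((j:ℤ) - (j':ℤ))*β, ?_⟩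
      have hh : ((j:ℤ) - (j':ℤ))*(g:ℤ) = (((j:ℤ) - (j':ℤ)) * α) * a + ((j:ℤ) - (j':ℤ)) * ((P:ℤ)*β) := by
        rw [hbez]; ring
      rw [hh, hz]; ring
    exact key j j' hj hj' hPd
  have hcount := count_lower A M P' α hP'0 (fun n hn => hn) hdist
  -- final ratio inequality

  refine ⟨A, M, P', hP'0, hindep, hcount, ?_⟩
  have hkR : (0:ℝ) < (k:ℝ) := by exact_mod_cast hk0
  have hpR : (0:ℝ) < (p:ℝ) := by positivity
  have hPR : (0:ℝ) < (P:ℝ) := by exact_mod_cast hP0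
  have hP'R : (0:ℝ) < (P':ℝ) := by exact_mod_cast hP'0
  have hgR : (0:ℝ) < (g:ℝ) := by exact_mod_cast hg0
  have step1 : (m:ℝ)/(P:ℝ) ≤ (M:ℝ)/(P':ℝ) := by
    rw [div_le_div_iff₀ hPR hP'R]
    have h1 : m * P' ≤ (M*g) * P' := Nat.mul_le_mul_right P' hMg2
    have h2 : (M*g) * P' = M * P := by rw [hPP']; ring
    have : m * P' ≤ M * P := by omega
    exact_mod_cast this
  have step2 : ((i:ℝ)+1)/(2*(i:ℝ)+3) - (2*(i:ℝ)+3)/(k:ℝ) ≤ (m:ℝ)/(P:ℝ) := by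
    have hmR : (m:ℝ) + (D:ℝ) = (k:ℝ)*((i:ℝ)+1) := by exact_mod_cast hmP
    have hDn : D ≤ p*p := le_of_lt (Nat.mul_lt_mul_of_lt_of_lt (by omega) ht)
    have hDR : (D:ℝ) ≤ (p:ℝ)*(p:ℝ) := by exact_mod_cast hDn
    have hpRe : (p:ℝ) = 2*(i:ℝ)+3 := by rw [hp]; push_cast; ring
    have hPRe : (P:ℝ) = (k:ℝ)*(p:ℝ) := by rw [hP]; push_cast; ring
    rw [hPRe]
    exact step2_aux (k:ℝ) (p:ℝ) (D:ℝ) (m:ℝ) (i:ℝ) hkR (by positivity) hpRe hmR hDR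
  linarith


lemma indRatio_le_lam (i k : ℕ) (hk : 1 ≤ k) :
    indRatio ({1, k, k + 2*i+1} : Finset ℕ) ≤ ((i:ℝ)+1)/(2*(i:ℝ)+3) := by
  apply Real.sSup_le
  · rintro x ⟨A, hA, rfl⟩
    exact density_le_lam hk hA
  · positivity

lemma floor_ratio_tendsto (M P' : ℕ) (hP' : 0 < P') :
    Filter.Tendsto (fun N : ℕ => (((2*N+1)/P' * M : ℕ):ℝ)/(2*(N:ℝ)+1)) atTop
      (nhds ((M:ℝ)/(P':ℝ))) := by
  have hP'R : (0:ℝ) < (P':ℝ) := by exact_mod_cast hP'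
  apply tendsto_of_tendsto_of_tendsto_of_le_of_le
    (g := fun N : ℕ => (M:ℝ)/(P':ℝ) - (M:ℝ)/(2*(N:ℝ)+1)) (h := fun _ => (M:ℝ)/(P':ℝ))
  · have h0 : Filter.Tendsto (fun N : ℕ => (M:ℝ)/(2*(N:ℝ)+1)) atTop (nhds 0) := by
      apply Tendsto.div_atTop tendsto_const_nhds
      apply Filter.tendsto_atTop_add_const_right
      exact (tendsto_natCast_atTop_atTop (R := ℝ)).const_mul_atTop (by norm_num)
    simpa using tendsto_const_nhds.sub h0
  · exact tendsto_const_nhds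
  · intro N
    dsimp only
    have hpos : (0:ℝ) < 2*(N:ℝ)+1 := by positivity
    set q := (2*N+1)/P' with hq
    have hdm := Nat.div_add_mod (2*N+1) P'
    have hr : (2*N+1) % P' < P' := Nat.mod_lt _ hP'
    -- M/P' - M/(2N+1) ≤ qM/(2N+1)
    rw [sub_le_iff_le_add, ← add_div, div_le_div_iff₀ hP'R hpos]
    have hc : P' * q + (2*N+1) % P' = 2*N+1 := hdm
    have hcR : (P':ℝ) * (q:ℝ) + (((2*N+1) % P' : ℕ):ℝ) = 2*(N:ℝ)+1 := by
      exact_mod_cast hc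
    have hrR : (((2*N+1) % P' : ℕ):ℝ) ≤ (P':ℝ) - 1 := by
      have : ((2*N+1) % P') + 1 ≤ P' := hr
      have := (Nat.cast_le (α := ℝ)).2 this
      push_cast at this
      linarith
    have hqM : ((q * M : ℕ):ℝ) = (q:ℝ)*(M:ℝ) := by push_cast; ring
    rw [hqM]
    have hM0 : (0:ℝ) ≤ (M:ℝ) := by positivity
    nlinarith [mul_le_mul_of_nonneg_left hrR hM0]
  · intro N
    dsimp only
    have hpos : (0:ℝ) < 2*(N:ℝ)+1 := by positivity
    set q := (2*N+1)/P' with hq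
    rw [div_le_div_iff₀ hpos hP'R]
    have h1 : q * P' ≤ 2*N+1 := Nat.div_mul_le_self _ _
    have h1R : (q:ℝ)*(P':ℝ) ≤ 2*(N:ℝ)+1 := by exact_mod_cast h1
    have hqM : ((q * M : ℕ):ℝ) = (q:ℝ)*(M:ℝ) := by push_cast; ring
    rw [hqM]
    have hM0 : (0:ℝ) ≤ (M:ℝ) := by positivity
    nlinarith

lemma indRatio_ge_lam (i k : ℕ) (hk : (2*i+3)*(2*i+3) + 1 ≤ k) :
    ((i:ℝ)+1)/(2*(i:ℝ)+3) - (2*(i:ℝ)+3)/(k:ℝ) ≤ indRatio ({1, k, k + 2*i+1} : Finset ℕ) := by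
  obtain ⟨A, M, P', hP'0, hindep, hcount, hratio⟩ := lower_construction i k hk
  have hdens : (M:ℝ)/(P':ℝ) ≤ density A := by
    apply le_limsup_of_tendsto_le (window_ratio_le_one A)
      (w := fun N : ℕ => (((2*N+1)/P' * M : ℕ):ℝ)/(2*(N:ℝ)+1))
    · intro N
      have hc : (((2*N+1)/P' * M : ℕ):ℝ) ≤ ((A ∩ Set.Icc (-(N:ℤ)) (N:ℤ)).ncard : ℝ) := by
        exact_mod_cast hcount N
      gcongr
    · exact floor_ratio_tendsto M P' hP'0
  have hmem : density A ≤ indRatio ({1, k, k + 2*i+1} : Finset ℕ) :=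
    le_csSup bddAbove_density ⟨A, hindep, rfl⟩
  linarith


/-- For fixed `i ≥ 0`, `ᾱ({1, k, k+2i+1}) → (i+1)/(2i+3)` as `k → ∞`. -/
theorem tendsto_indRatio_one_k_kplusodd (i : ℕ) :
    Filter.Tendsto (fun k : ℕ => indRatio ({1, k, k + 2 * i + 1} : Finset ℕ))
      Filter.atTop (nhds (((i : ℝ) + 1) / (2 * (i : ℝ) + 3))) := by
  apply tendsto_of_tendsto_of_tendsto_of_le_of_le'
    (g := fun k : ℕ => ((i:ℝ)+1)/(2*(i:ℝ)+3) - (2*(i:ℝ)+3)/(k:ℝ))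
    (h := fun _ : ℕ => ((i:ℝ)+1)/(2*(i:ℝ)+3))
  · have h0 : Filter.Tendsto (fun k : ℕ => (2*(i:ℝ)+3)/(k:ℝ)) atTop (nhds 0) :=
      tendsto_const_div_atTop_nhds_zero_nat _
    simpa using tendsto_const_nhds.sub h0
  · exact tendsto_const_nhds
  · filter_upwards [Filter.eventually_ge_atTop ((2*i+3)*(2*i+3) + 1)] with k hk
    exact indRatio_ge_lam i k hk
  · filter_upwards [Filter.eventually_ge_atTop 1] with k hk
    exact indRatio_le_lam i k hk
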